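/- Let A be an associative algebra over a field k of characteristic 0, let λ ∈ k, and let R : A → A be a Rota–Baxter operator of weight λ. Let l ≥ 1, k₀ ≥ 0 be integers and let b₁, …, b_{l+k₀+1} ∈ A satisfy b_l = b_{l+1} = … = b_{l+k₀} =: c. Then R( R(b₁)···R(b_{l−1}) · c · R(c)^{k₀} · R(b_{l+k₀+1}) ) = (1/(k₀+1)) · R(b₁)···R(b_{l−1}) · R(c)^{k₀+1} · R(b_{l+k₀+1}) + (1/(k₀+1)) · R( Σ_{i=2}^{k₀+1} (−1)^i binom(k₀+1, i) R(b₁)···R(b_{l−1}) · [c, R(c)^{(i−1)}] · R(c)^{k₀+1−i} · R(b_{l+k₀+1}) − Σ_S λ^{|S|−1} ∏_{i=1}^{l+k₀+1} c_i^S ), where S ranges over all nonempty subsets of {1, …, l+k₀+1} except the singletons {i} with l ≤ i ≤ l+k₀, the product ∏_{i=1}^{l+k₀+1} c_i^S is taken in order with c_i^S = b_i if i ∈ S and c_i^S = R(b_i) if i ∉ S, and [c, R(c)^{(p)}] denotes the iterated commutator [[…[[c, R(c)], R(c)]…], R(c)] with p occurrences of R(c). -/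

import Mathlib

/-- Iterated commutator `[y, x^{(p)}] = [[…[[y,x],x]…],x]` with `p` occurrences of `x`. -/
def iterBracket {A : Type*} [Ring A] (y x : A) : ℕ → A
  | 0 => y
  | p + 1 => iterBracket y x p * x - x * iterBracket y x p

open Finset in
lemma powerset_split {M : Type*} [AddCommMonoid M] (m : ℕ) (f : Finset ℕ → M) :
    ∑ S ∈ ((Finset.Icc 1 (m+1)).powerset.filter (· ≠ ∅)), f S
      = (∑ S ∈ ((Finset.Icc 1 m).powerset.filter (· ≠ ∅)), f S)
        + ((∑ S ∈ ((Finset.Icc 1 m).powerset.filter (· ≠ ∅)), f (insert (m+1) S))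
        + f {m+1}) := by
  have hm1 : (m+1) ∉ Finset.Icc 1 m := by simp
  have h1 : Finset.Icc 1 (m+1) = insert (m+1) (Finset.Icc 1 m) := by
    ext i; simp [Nat.lt_succ_iff, Finset.mem_insert, Nat.le_succ_iff]; omega
  rw [h1, Finset.powerset_insert, Finset.filter_union, Finset.sum_union]
  · congr 1
    have himg : (Finset.image (insert (m+1)) (Finset.Icc 1 m).powerset).filter (· ≠ ∅)
        = Finset.image (insert (m+1)) (Finset.Icc 1 m).powerset := by
      apply Finset.filter_true_of_mem
      intro S hS
      obtain ⟨T, _, rfl⟩ := Finset.mem_image.1 hS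
      simp [Finset.insert_ne_empty]
    rw [himg, Finset.sum_image]
    · -- ∑ T ∈ powerset, f (insert (m+1) T) = ∑ over filter + f {m+1}
      have hsplit := Finset.sum_filter_add_sum_filter_not (Finset.Icc 1 m).powerset
        (· ≠ ∅) (fun T => f (insert (m+1) T))
      rw [← hsplit]
      congr 1
      have h2 : (Finset.Icc 1 m).powerset.filter (fun S => ¬ S ≠ ∅) = {∅} := by
        ext S
        simp only [Finset.mem_filter, not_not, Finset.mem_singleton]
        exact ⟨fun h => h.2, fun h => ⟨h ▸ Finset.empty_mem_powerset _, h⟩⟩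
      rw [h2, Finset.sum_singleton]
      congr 1
    · intro x hx y hy hxy
      have hx' : (m+1) ∉ x := fun h => hm1 (Finset.mem_powerset.1 hx h)
      have hy' : (m+1) ∉ y := fun h => hm1 (Finset.mem_powerset.1 hy h)
      ext a
      constructor <;> intro ha
      · have h2 : a ∈ insert (m+1) y := hxy ▸ Finset.mem_insert_of_mem ha
        rcases Finset.mem_insert.1 h2 with h | h
        · exact absurd (h ▸ ha) hx'
        · exact h
      · have h2 : a ∈ insert (m+1) x := hxy.symm ▸ Finset.mem_insert_of_mem ha
        rcases Finset.mem_insert.1 h2 with h | h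
        · exact absurd (h ▸ ha) hy'
        · exact h
  · rw [Finset.disjoint_left]
    intro S hS hS'
    have h1 : S ∈ (Finset.Icc 1 m).powerset := (Finset.mem_filter.1 hS).1
    have h2 : S ∈ Finset.image (insert (m+1)) (Finset.Icc 1 m).powerset :=
      (Finset.mem_filter.1 hS').1
    obtain ⟨T, _, rfl⟩ := Finset.mem_image.1 h2
    exact hm1 (Finset.mem_powerset.1 h1 (Finset.mem_insert_self _ _))

lemma prod_concat {A : Type*} [Ring A] (f : ℕ → A) (m : ℕ) :
    (List.map f (List.range' 1 (m+1))).prod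
      = (List.map f (List.range' 1 m)).prod * f (m+1) := by
  have h : List.range' 1 (m+1) = List.range' 1 m ++ [m+1] := by
    have := List.range'_concat (step := 1) (s := 1) (n := m)
    simpa [Nat.add_comm] using this
  rw [h, List.map_append, List.prod_append, List.map_singleton, List.prod_singleton]

lemma expand {k A : Type*} [Field k] [Ring A] [Algebra k A] (lam : k) (R : A →ₗ[k] A)
    (hR : ∀ x y : A, R x * R y = R (R x * y + x * R y + lam • (x * y)))
    (b : ℕ → A) : ∀ m, 1 ≤ m →
    (List.map (fun i => R (b i)) (List.range' 1 m)).prod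
      = R (∑ S ∈ (Finset.Icc 1 m).powerset.filter (· ≠ ∅),
          lam ^ (S.card - 1) •
            (List.map (fun i => if i ∈ S then b i else R (b i)) (List.range' 1 m)).prod) := by
  intro m
  induction m with
  | zero => omega
  | succ m IH =>
    intro _
    rcases Nat.eq_zero_or_pos m with h1 | h1
    · subst h1
      have hs : (Finset.Icc 1 1).powerset.filter (· ≠ ∅) = {{1}} := by decide
      rw [hs, Finset.sum_singleton]
      simp
    · have IH := IH h1
      set Sm := ∑ S ∈ (Finset.Icc 1 m).powerset.filter (· ≠ ∅),
          lam ^ (S.card - 1) •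
            (List.map (fun i => if i ∈ S then b i else R (b i)) (List.range' 1 m)).prod with hSm
      rw [prod_concat, IH, hR]
      congr 1
      rw [powerset_split m (fun S => lam ^ (S.card - 1) •
            (List.map (fun i => if i ∈ S then b i else R (b i)) (List.range' 1 (m+1))).prod)]
      have e1 : R Sm * b (m+1)
          = lam ^ (({m+1} : Finset ℕ).card - 1) •
            (List.map (fun i => if i ∈ ({m+1} : Finset ℕ) then b i else R (b i))
              (List.range' 1 (m+1))).prod := by
        rw [← IH, prod_concat (fun i => if i ∈ ({m+1} : Finset ℕ) then b i else R (b i)) m]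
        rw [List.map_congr_left (l := List.range' 1 m) (g := fun i => R (b i))
          (fun a ha => by
            have := (List.mem_range'_1.1 ha).2
            have hne : a ≠ m+1 := by omega
            simp [hne])]
        simp only [Finset.card_singleton, Nat.sub_self, pow_zero, one_smul]
        rw [if_pos (Finset.mem_singleton_self (m+1))]
        congr 2
        apply List.map_congr_left
        intro a ha
        have h2 := (List.mem_range'_1.1 ha).2
        have hne : ¬ a = m+1 := by omega
        simp [hne]
      have e2 : Sm * R (b (m+1))
          = ∑ S ∈ (Finset.Icc 1 m).powerset.filter (· ≠ ∅),
              lam ^ (S.card - 1) •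
                (List.map (fun i => if i ∈ S then b i else R (b i))
                  (List.range' 1 (m+1))).prod := by
        rw [hSm, Finset.sum_mul]
        apply Finset.sum_congr rfl
        intro S hS
        have hS' : (m+1) ∉ S := by
          intro h
          have := Finset.mem_powerset.1 (Finset.mem_filter.1 hS).1 h
          simp at this
        rw [smul_mul_assoc, prod_concat (fun i => if i ∈ S then b i else R (b i)) m]
        simp [hS']
      have e3 : lam • (Sm * b (m+1))
          = ∑ S ∈ (Finset.Icc 1 m).powerset.filter (· ≠ ∅),
              lam ^ ((insert (m+1) S).card - 1) •
                (List.map (fun i => if i ∈ insert (m+1) S then b i else R (b i))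
                  (List.range' 1 (m+1))).prod := by
        rw [hSm, Finset.sum_mul, Finset.smul_sum]
        apply Finset.sum_congr rfl
        intro S hS
        have hSmem := Finset.mem_filter.1 hS
        have hS' : (m+1) ∉ S := by
          intro h
          have := Finset.mem_powerset.1 hSmem.1 h
          simp at this
        have hcard : S.card ≠ 0 := by
          simp only [ne_eq, Finset.card_eq_zero]
          exact hSmem.2
        rw [prod_concat (fun i => if i ∈ insert (m+1) S then b i else R (b i)) m]
        rw [List.map_congr_left (l := List.range' 1 m) (g := fun i => if i ∈ S then b i else R (b i))
          (fun a ha => by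
            have := (List.mem_range'_1.1 ha).2
            have hne : a ≠ m+1 := by omega
            simp [Finset.mem_insert, hne])]
        rw [Finset.card_insert_of_notMem hS']
        have hc : S.card + 1 - 1 = S.card - 1 + 1 := by omega
        rw [hc, pow_succ, if_pos (Finset.mem_insert_self _ _)]
        rw [smul_mul_assoc, mul_comm (lam ^ (S.card - 1)) lam, mul_smul]
        congr 3
        exact congrArg List.prod (List.map_congr_left (fun a ha => by
          have h2 := (List.mem_range'_1.1 ha).2
          have hne : ¬ a = m+1 := by omega
          simp [Finset.mem_insert, hne]))
      rw [e1, e2, e3]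
      abel

lemma xpow_mul {k A : Type*} [Field k] [Ring A] [Algebra k A] (x y : A) : ∀ j : ℕ,
    x ^ j * y = ∑ p ∈ Finset.range (j+1),
      ((-1:k)^p * (j.choose p : k)) • (iterBracket y x p * x ^ (j-p)) := by
  intro j
  induction j with
  | zero => simp [iterBracket]
  | succ j IH =>
    have step : x ^ (j+1) * y
        = ∑ p ∈ Finset.range (j+1), ((-1:k)^p * (j.choose p : k)) •
            (iterBracket y x p * x ^ (j+1-p))
          - ∑ p ∈ Finset.range (j+1), ((-1:k)^p * (j.choose p : k)) •
            (iterBracket y x (p+1) * x ^ (j-p)) := by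
      rw [pow_succ', mul_assoc, IH, Finset.mul_sum, ← Finset.sum_sub_distrib]
      apply Finset.sum_congr rfl
      intro p hp
      have hp' : p ≤ j := by simpa [Nat.lt_succ_iff] using hp
      rw [mul_smul_comm, ← smul_sub]
      congr 1
      have hxB : x * iterBracket y x p = iterBracket y x p * x - iterBracket y x (p+1) := by
        show _ = _ - (iterBracket y x p * x - x * iterBracket y x p)
        rw [sub_sub_cancel]
      rw [← mul_assoc, hxB, sub_mul, mul_assoc]
      congr 2
      rw [← pow_succ']
      congr 1
      omega
    rw [step]
    have htar : ∑ p ∈ Finset.range (j+2),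
          ((-1:k)^p * ((j+1).choose p : k)) • (iterBracket y x p * x ^ (j+1-p))
        = ∑ p ∈ Finset.range (j+1), ((-1:k)^p * (j.choose p : k)) •
            (iterBracket y x p * x ^ (j+1-p))
          + ∑ p ∈ Finset.range (j+1), ((-1:k)^(p+1) * (j.choose p : k)) •
            (iterBracket y x (p+1) * x ^ (j-p)) := by
      have hsplit : ∀ p ∈ Finset.range (j+2),
          ((-1:k)^p * ((j+1).choose p : k)) • (iterBracket y x p * x ^ (j+1-p))
          = ((-1:k)^p * (j.choose p : k)) • (iterBracket y x p * x ^ (j+1-p))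
            + (if p = 0 then 0 else
                ((-1:k)^p * (j.choose (p-1) : k)) • (iterBracket y x p * x ^ (j+1-p))) := by
        intro p _
        rcases Nat.eq_zero_or_pos p with h | h
        · subst h; simp
        · obtain ⟨q, rfl⟩ := Nat.exists_eq_add_of_le h
          simp only [Nat.add_sub_cancel_left]  -- maybe wrong; p = 1 + q
          rw [if_neg (by omega)]
          have hpascal : (j+1).choose (1+q) = j.choose q + j.choose (1+q) := by
            rw [Nat.add_comm 1 q, Nat.choose_succ_succ]
          rw [hpascal]
          push_cast
          rw [mul_add, add_smul]
          exact add_comm _ _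
      rw [Finset.sum_congr rfl hsplit, Finset.sum_add_distrib]
      congr 1
      · rw [Finset.sum_range_succ, Nat.choose_succ_self]
        simp
      · rw [Finset.sum_range_succ']
        norm_num
        apply Finset.sum_congr rfl
        intro p _
        have h2 : j + 1 - (p + 1) = j - p := by omega
        rw [h2]
    rw [htar]
    rw [sub_eq_add_neg, ← Finset.sum_neg_distrib]
    congr 1
    apply Finset.sum_congr rfl
    intro p _
    rw [← neg_smul]
    congr 1
    ring

lemma sum_swap_br {k A : Type*} [Field k] [Ring A] [Algebra k A] (x y : A) (n : ℕ) :
    ∑ j ∈ Finset.range (n+1), x ^ j * y * x ^ (n-j)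
      = ((n+1 : ℕ) : k) • (y * x ^ n)
        - ∑ i ∈ Finset.Icc 2 (n+1), ((-1:k)^i * ((n+1).choose i : k)) •
            (iterBracket y x (i-1) * x ^ (n+1-i)) := by
  have h1 : ∀ j ∈ Finset.range (n+1), x ^ j * y * x ^ (n-j)
      = ∑ p ∈ Finset.range (j+1), ((-1:k)^p * (j.choose p : k)) •
          (iterBracket y x p * x ^ (n-p)) := by
    intro j hj
    have hj' : j ≤ n := by simpa [Nat.lt_succ_iff] using hj
    rw [xpow_mul (k := k), Finset.sum_mul]
    apply Finset.sum_congr rfl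
    intro p hp
    have hp' : p ≤ j := by simpa [Nat.lt_succ_iff] using hp
    rw [smul_mul_assoc, mul_assoc, ← pow_add]
    congr 3
    omega
  rw [Finset.sum_congr rfl h1]
  have h2 : ∑ j ∈ Finset.range (n+1), ∑ p ∈ Finset.range (j+1),
        ((-1:k)^p * (j.choose p : k)) • (iterBracket y x p * x ^ (n-p))
      = ∑ p ∈ Finset.range (n+1), ∑ j ∈ Finset.Icc p n,
        ((-1:k)^p * (j.choose p : k)) • (iterBracket y x p * x ^ (n-p)) := by
    have h := Finset.sum_Ico_Ico_comm 0 (n+1)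
      (fun p j => ((-1:k)^p * (j.choose p : k)) • (iterBracket y x p * x ^ (n-p)))
    simp only [Finset.range_eq_Ico]
    rw [← h]
    apply Finset.sum_congr rfl
    intro p _
    rw [Finset.Ico_add_one_right_eq_Icc]
  rw [h2]
  have h3 : ∀ p ∈ Finset.range (n+1),
      ∑ j ∈ Finset.Icc p n, ((-1:k)^p * (j.choose p : k)) • (iterBracket y x p * x ^ (n-p))
        = ((-1:k)^p * (((n+1).choose (p+1) : ℕ) : k)) • (iterBracket y x p * x ^ (n-p)) := by
    intro p _
    rw [← Finset.sum_smul]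
    congr 1
    rw [← Finset.mul_sum]
    congr 1
    rw [← Nat.cast_sum, Nat.sum_Icc_choose]
  rw [Finset.sum_congr rfl h3, Finset.sum_range_succ']
  have h4 : ((-1:k)^0 * (((n+1).choose (0+1) : ℕ) : k)) • (iterBracket y x 0 * x ^ (n-0))
      = ((n+1 : ℕ) : k) • (y * x ^ n) := by
    simp [iterBracket, Nat.choose_one_right]
  rw [h4, sub_eq_add_neg, add_comm, ← Finset.sum_neg_distrib]
  congr 1
  apply Finset.sum_nbij' (fun p => p + 2) (fun i => i - 2)
  · intro a ha
    simp only [Finset.mem_range] at ha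
    simp only [Finset.mem_Icc]
    omega
  · intro a ha
    simp only [Finset.mem_Icc] at ha
    simp only [Finset.mem_range]
    omega
  · intro a _; omega
  · intro a ha
    simp only [Finset.mem_Icc] at ha
    omega
  · intro p hp
    simp only [Finset.mem_range] at hp
    rw [← neg_smul]
    have h6 : p + 2 - 1 = p + 1 := by omega
    have h7 : n + 1 - (p + 2) = n - (p + 1) := by omega
    rw [h6, h7]
    congr 1
    have h8 : (-1:k)^(p+2) = -(-1:k)^(p+1) := by rw [pow_succ]; ring
    rw [h8]
    ring

lemma prod_const {A : Type*} [Ring A] (f : ℕ → A) (x : A) (s len : ℕ)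
    (hf : ∀ j, s ≤ j → j < s + len → f j = x) :
    (List.map f (List.range' s len)).prod = x ^ len := by
  rw [List.prod_eq_pow_card _ x, List.length_map, List.length_range']
  intro y hy
  simp only [List.mem_map] at hy
  obtain ⟨j, hj, rfl⟩ := hy
  have h := List.mem_range'_1.1 hj
  exact hf j h.1 h.2

lemma prod_one_off {A : Type*} [Ring A] (f : ℕ → A) (x c : A) : ∀ (len s i : ℕ),
    s ≤ i → i < s + len → (∀ j, s ≤ j → j < s + len → f j = if j = i then c else x) →
    (List.map f (List.range' s len)).prod = x ^ (i - s) * c * x ^ (s + len - i - 1) := by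
  intro len
  induction len with
  | zero => intro s i h1 h2; omega
  | succ len IH =>
    intro s i h1 h2 hf
    rw [List.range'_succ, List.map_cons, List.prod_cons]
    rcases Nat.eq_or_lt_of_le h1 with h | h
    · subst h
      rw [hf s le_rfl (by omega), if_pos rfl]
      rw [prod_const f x (s+1) len
        (fun j hj1 hj2 => by rw [hf j (by omega) (by omega), if_neg (by omega)])]
      rw [Nat.sub_self, pow_zero, one_mul]
      congr 2
      omega
    · rw [hf s le_rfl (by omega), if_neg (by omega)]
      rw [IH (s+1) i (by omega) (by omega) (fun j hj1 hj2 => hf j (by omega) (by omega))]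
      rw [← mul_assoc, ← mul_assoc, ← pow_succ']
      have e1 : i - (s+1) + 1 = i - s := by omega
      have e2 : s + 1 + len - i - 1 = s + (len + 1) - i - 1 := by omega
      rw [e1, e2]


theorem stmt2 {k A : Type*} [Field k] [CharZero k] [Ring A] [Algebra k A] (lam : k)
    (R : A →ₗ[k] A)
    (hR : ∀ x y : A, R x * R y = R (R x * y + x * R y + lam • (x * y)))
    (l k₀ : ℕ) (hl : 1 ≤ l) (b : ℕ → A) (c : A)
    (hb : ∀ i, l ≤ i → i ≤ l + k₀ → b i = c) :
    R ((List.map (fun i => R (b i)) (List.range' 1 (l - 1))).prod * c * (R c) ^ k₀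
        * R (b (l + k₀ + 1))) =
      ((k₀ + 1 : k)⁻¹) • ((List.map (fun i => R (b i)) (List.range' 1 (l - 1))).prod
          * (R c) ^ (k₀ + 1) * R (b (l + k₀ + 1)))
      + ((k₀ + 1 : k)⁻¹) • R (
          (∑ i ∈ Finset.Icc 2 (k₀ + 1),
            ((-1 : k) ^ i * (Nat.choose (k₀ + 1) i : k)) •
              ((List.map (fun j => R (b j)) (List.range' 1 (l - 1))).prod
                * iterBracket c (R c) (i - 1) * (R c) ^ (k₀ + 1 - i) * R (b (l + k₀ + 1))))
          - ∑ S ∈ (Finset.Icc 1 (l + k₀ + 1)).powerset.filter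
              (fun S => S ≠ ∅ ∧ ∀ i ∈ Finset.Icc l (l + k₀), S ≠ {i}),
              lam ^ (S.card - 1) •
                (List.map (fun i => if i ∈ S then b i else R (b i))
                  (List.range' 1 (l + k₀ + 1))).prod) := by
  have hm1 : 1 ≤ l + k₀ + 1 := by omega
  set x := R c with hx
  set P := (List.map (fun i => R (b i)) (List.range' 1 (l - 1))).prod with hP
  set D := R (b (l + k₀ + 1)) with hD
  have hlist1 : List.range' 1 (l-1) ++ List.range' l (k₀+1) = List.range' 1 (l+k₀) := by
    have h := List.range'_append (step := 1) (s := 1) (m := l-1) (n := k₀+1)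
    rw [show 1+1*(l-1) = l from by omega, show (l-1)+(k₀+1) = l+k₀ from by omega] at h
    exact h
  have hlist : List.range' 1 (l+k₀+1)
      = (List.range' 1 (l-1) ++ List.range' l (k₀+1)) ++ [l+k₀+1] := by
    rw [hlist1]
    have h := List.range'_1_concat (s := 1) (n := l+k₀)
    rw [show 1+(l+k₀) = l+k₀+1 from by omega] at h
    exact h
  have hB : (List.map (fun i => R (b i)) (List.range' 1 (l+k₀+1))).prod
      = P * x^(k₀+1) * D := by
    rw [hlist, List.map_append, List.map_append, List.prod_append, List.prod_append,
      List.map_singleton, List.prod_singleton]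
    congr 2
    exact prod_const _ x l (k₀+1) (fun j hj1 hj2 => by rw [hb j hj1 (by omega)])
  have hA := expand lam R hR b (l+k₀+1) hm1
  set F := (Finset.Icc 1 (l + k₀ + 1)).powerset.filter
      (fun S => S ≠ ∅ ∧ ∀ i ∈ Finset.Icc l (l + k₀), S ≠ {i}) with hF
  set g := fun S : Finset ℕ => lam ^ (S.card - 1) •
      (List.map (fun i => if i ∈ S then b i else R (b i)) (List.range' 1 (l+k₀+1))).prod with hg
  have hpart : (Finset.Icc 1 (l+k₀+1)).powerset.filter (· ≠ ∅)
      = F ∪ (Finset.Icc l (l+k₀)).image (fun i => ({i} : Finset ℕ)) := by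
    ext S
    simp only [hF, Finset.mem_union, Finset.mem_filter, Finset.mem_image, Finset.mem_powerset]
    constructor
    · rintro ⟨hsub, hne⟩
      by_cases hsing : ∃ i ∈ Finset.Icc l (l+k₀), S = {i}
      · right
        obtain ⟨i, hi, rfl⟩ := hsing
        exact ⟨i, hi, rfl⟩
      · left
        push_neg at hsing
        exact ⟨hsub, hne, hsing⟩
    · rintro (⟨hsub, hne, _⟩ | ⟨i, hi, rfl⟩)
      · exact ⟨hsub, hne⟩
      · simp only [Finset.mem_Icc] at hi
        constructor
        · intro a ha
          simp only [Finset.mem_singleton] at ha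
          subst ha
          simp only [Finset.mem_Icc]
          omega
        · exact Finset.singleton_ne_empty i
  have hdisj : Disjoint F ((Finset.Icc l (l+k₀)).image (fun i => ({i} : Finset ℕ))) := by
    rw [Finset.disjoint_left]
    intro S hS hS'
    obtain ⟨i, hi, rfl⟩ := Finset.mem_image.1 hS'
    exact ((Finset.mem_filter.1 hS).2.2 i hi) rfl
  have hCsum : ∑ S ∈ (Finset.Icc 1 (l+k₀+1)).powerset.filter (· ≠ ∅), g S
      = ∑ S ∈ F, g S + ∑ i ∈ Finset.Icc l (l+k₀), g {i} := by
    rw [hpart, Finset.sum_union hdisj,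
      Finset.sum_image (fun a _ b _ h => Finset.singleton_injective h)]
  have hsingle : ∀ i ∈ Finset.Icc l (l+k₀),
      g {i} = P * (x ^ (i-l) * c * x ^ (k₀ - (i-l))) * D := by
    intro i hi
    simp only [Finset.mem_Icc] at hi
    rw [hg]
    simp only [Finset.card_singleton, Nat.sub_self, pow_zero, one_smul]
    rw [hlist, List.map_append, List.map_append, List.prod_append, List.prod_append,
      List.map_singleton, List.prod_singleton]
    have hlast : (if (l+k₀+1) ∈ ({i} : Finset ℕ) then b (l+k₀+1) else R (b (l+k₀+1))) = D := by
      rw [if_neg]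
      simp only [Finset.mem_singleton]
      omega
    rw [hlast]
    congr 2
    · apply congrArg List.prod
      apply List.map_congr_left
      intro a ha
      have h := List.mem_range'_1.1 ha
      rw [if_neg]
      simp only [Finset.mem_singleton]
      omega
    · have h := prod_one_off (fun j => if j ∈ ({i} : Finset ℕ) then b j else R (b j)) x c
        (k₀+1) l i hi.1 (by omega) (fun j hj1 hj2 => by
          simp only [Finset.mem_singleton]
          by_cases h : j = i
          · rw [if_pos h, if_pos h, hb j hj1 (by omega)]
          · rw [if_neg h, if_neg h, hb j hj1 (by omega)])
      rw [h]
      congr 2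
      omega
  have hsum2 : ∑ i ∈ Finset.Icc l (l+k₀), g {i}
      = ∑ j ∈ Finset.range (k₀+1), P * (x ^ j * c * x ^ (k₀ - j)) * D := by
    rw [Finset.sum_congr rfl hsingle]
    apply Finset.sum_nbij' (fun i => i - l) (fun j => j + l)
    · intro a ha
      simp only [Finset.mem_Icc] at ha
      simp only [Finset.mem_range]
      omega
    · intro a ha
      simp only [Finset.mem_range] at ha
      simp only [Finset.mem_Icc]
      omega
    · intro a ha
      simp only [Finset.mem_Icc] at ha
      omega
    · intro a ha
      omega
    · intro a ha
      rfl
  have hsum3 : ∑ j ∈ Finset.range (k₀+1), P * (x ^ j * c * x ^ (k₀ - j)) * D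
      = ((k₀+1 : ℕ) : k) • (P * c * x ^ k₀ * D)
        - ∑ i ∈ Finset.Icc 2 (k₀+1), ((-1:k)^i * ((k₀+1).choose i : k)) •
            (P * iterBracket c x (i-1) * x ^ (k₀+1-i) * D) := by
    have h0 : ∑ j ∈ Finset.range (k₀+1), P * (x ^ j * c * x ^ (k₀ - j)) * D
        = P * (∑ j ∈ Finset.range (k₀+1), x ^ j * c * x ^ (k₀ - j)) * D := by
      rw [Finset.mul_sum, Finset.sum_mul]
    rw [h0, sum_swap_br (k := k) x c k₀, mul_sub, sub_mul, mul_smul_comm, smul_mul_assoc,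
      Finset.mul_sum, Finset.sum_mul]
    congr 1
    · congr 1
      rw [← mul_assoc]
    · apply Finset.sum_congr rfl
      intro i _
      rw [mul_smul_comm, smul_mul_assoc, ← mul_assoc]
  set E := ∑ i ∈ Finset.Icc 2 (k₀+1), ((-1:k)^i * ((k₀+1).choose i : k)) •
      (P * iterBracket c x (i-1) * x ^ (k₀+1-i) * D) with hE
  set T := P * c * x ^ k₀ * D with hT
  have key : ((k₀ : k) + 1) • R T = P * x^(k₀+1) * D + R (E - ∑ S ∈ F, g S) := by
    have h1 : P * x^(k₀+1) * D
        = R (∑ S ∈ F, g S) + (((k₀+1 : ℕ) : k) • R T - R E) := by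
      rw [← hB, hA, hCsum, map_add, hsum2, hsum3, map_sub, map_smul]
    rw [map_sub]
    have hc : ((k₀ : k) + 1) = ((k₀+1 : ℕ) : k) := by push_cast; ring
    rw [hc, h1]
    abel
  have hne : ((k₀ : k) + 1) ≠ 0 := Nat.cast_add_one_ne_zero k₀
  calc R T = ((k₀ : k) + 1)⁻¹ • (((k₀ : k) + 1) • R T) := (inv_smul_smul₀ hne _).symm
    _ = _ := by rw [key, smul_add]
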